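/- In the adversarial lower-bound instance, any deterministic algorithm incurs total latency at least (M/4)·(√M/2): during the √M/2 time steps in [b + M − √M/2, b + M − 1] the long request occupies at least M − √M/2 memory, so the total memory available for short requests in that window is at most M/4; hence at least M/4 of the M/2 short requests (each needing memory ≥ 1 per step to be processed) can only start at or after time b + M, and each such request incurs latency at least √M/2. -/

import Mathlib

/-- Memory used at time `t` by a request with prompt size `s`, output length `o`,
started (non-preemptively) at time `p`: it occupies `s + (t - p)` units of memory
at every time `t ∈ (p, p + o]`, and nothing otherwise. -/
def memUse (s o p t : ℕ) : ℕ := if p < t ∧ t ≤ p + o then s + (t - p) else 0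

/-- A schedule `p` (start times) is feasible for an instance with arrival times `a`,
prompt sizes `s`, output lengths `o` on a single worker with memory limit `M`:
no request starts before its arrival, and at every time the total memory of
active requests is at most `M`. -/
def Feasible (M : ℕ) {n : ℕ} (a s o p : Fin n → ℕ) : Prop :=
  (∀ i, a i ≤ p i) ∧ ∀ t : ℕ, ∑ i, memUse (s i) (o i) (p i) t ≤ M

/-- Total end-to-end latency of a schedule: each request started at `p i` finishes
at `p i + o i`, so its latency is `p i + o i - a i`. -/
def TEL {n : ℕ} (a o p : Fin n → ℕ) : ℕ := ∑ i, (p i + o i - a i)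

/-- The adversarial instance, parametrized so that all quantities are integral:
`M = 4m²` (so `√M/2 = m` and `M/2 = 2m²`). Request `0` is the "long" request
(arrival `0`, output length `M - 1`); the `M/2 = 2m²` "short" requests (output
length `1`) arrive at `r = b + M - √M/2 = b + 4m² - m`, where `b` is the time
the algorithm starts the long request. All prompt sizes are `1`. -/
def instArrival (m b : ℕ) : Fin (2 * m ^ 2 + 1) → ℕ :=
  fun i => if i.val = 0 then 0 else b + 4 * m ^ 2 - m

def instSize (m b : ℕ) : Fin (2 * m ^ 2 + 1) → ℕ := fun _ => 1

def instOut (m b : ℕ) : Fin (2 * m ^ 2 + 1) → ℕ :=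
  fun i => if i.val = 0 then 4 * m ^ 2 - 1 else 1

/-- In the adversarial lower-bound instance, any deterministic algorithm (i.e. any
feasible schedule that starts the long request at time `b`) incurs total latency
at least `(M/4)·(√M/2) = m²·m`. -/
theorem stmt7 (m b : ℕ) (hm : 1 ≤ m) :
    ∀ p : Fin (2 * m ^ 2 + 1) → ℕ,
      Feasible (4 * m ^ 2) (instArrival m b) (instSize m b) (instOut m b) p →
      p ⟨0, Nat.succ_pos _⟩ = b →
      m ^ 2 * m ≤ TEL (instArrival m b) (instOut m b) p := by
  intro p hfeas hp0
  obtain ⟨harr, hmem⟩ := hfeas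
  obtain ⟨q, hq⟩ : ∃ q, q = m ^ 2 := ⟨_, rfl⟩
  have hmq : m ≤ q := by nlinarith
  have hqq : (m - 1) * (m - 2) ≤ 2 * q := by nlinarith [Nat.sub_le m 1, Nat.sub_le m 2]
  -- arrivals of short requests
  have harr' : ∀ i : Fin (2 * m ^ 2 + 1), i.val ≠ 0 → b + 4 * m ^ 2 - m ≤ p i := by
    intro i hi
    have := harr i
    simpa [instArrival, hi] using this
  -- early and late sets
  set E : Finset (Fin (2 * m ^ 2 + 1)) :=
    Finset.univ.filter (fun i => i.val ≠ 0 ∧ p i ≤ b + 4 * m ^ 2 - 2) with hE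
  set L : Finset (Fin (2 * m ^ 2 + 1)) :=
    Finset.univ.filter (fun i => i.val ≠ 0 ∧ b + 4 * m ^ 2 - 1 ≤ p i) with hL
  -- fiberwise decomposition of E
  have hfib : E.card = ∑ v ∈ Finset.Icc (b + 4 * m ^ 2 - m) (b + 4 * m ^ 2 - 2),
      (E.filter (fun i => p i = v)).card := by
    apply Finset.card_eq_sum_card_fiberwise
    intro i hi
    simp only [hE, Finset.mem_filter] at hi
    simp only [Finset.mem_coe, Finset.mem_filter, Finset.coe_Icc, Set.mem_Icc, Finset.mem_Icc] at hi ⊢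
    exact ⟨harr' i hi.2.1, hi.2.2⟩
  have fibbound : ∀ v ∈ Finset.Icc (b + 4 * m ^ 2 - m) (b + 4 * m ^ 2 - 2),
      2 * (E.filter (fun i => p i = v)).card ≤ m - 2 := by
    intro v hv
    simp only [Finset.mem_Icc] at hv
    set F := E.filter (fun i => p i = v) with hF
    have h0F : (⟨0, Nat.succ_pos _⟩ : Fin (2 * m ^ 2 + 1)) ∉ F := by
      simp [hF, hE, Finset.mem_filter]
    have hsub : insert (⟨0, Nat.succ_pos _⟩ : Fin (2 * m ^ 2 + 1)) F ⊆ Finset.univ :=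
      Finset.subset_univ _
    have h1 := hmem (v + 1)
    have h2 : ∑ i ∈ insert (⟨0, Nat.succ_pos _⟩ : Fin (2 * m ^ 2 + 1)) F,
        memUse (instSize m b i) (instOut m b i) (p i) (v + 1) ≤ 4 * m ^ 2 :=
      le_trans (Finset.sum_le_sum_of_subset hsub) h1
    rw [Finset.sum_insert h0F] at h2
    -- long request memory at time v+1
    have hlong : memUse (instSize m b ⟨0, Nat.succ_pos _⟩) (instOut m b ⟨0, Nat.succ_pos _⟩)
        (p ⟨0, Nat.succ_pos _⟩) (v + 1) = 1 + (v + 1 - b) := by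
      rw [hp0]
      have hcond : b < v + 1 ∧ v + 1 ≤ b + (4 * m ^ 2 - 1) := by
        constructor <;> omega
      simp [memUse, instSize, instOut, hcond]
    -- short request memory at time v+1
    have hshort : ∀ i ∈ F, memUse (instSize m b i) (instOut m b i) (p i) (v + 1) = 2 := by
      intro i hi
      simp only [hF, hE, Finset.mem_filter] at hi
      obtain ⟨⟨-, hi0, -⟩, hpv⟩ := hi
      simp [memUse, instSize, instOut, hi0, hpv]
    rw [hlong, Finset.sum_congr rfl hshort, Finset.sum_const, smul_eq_mul] at h2
    omega
  have hEcard : E.card ≤ q := by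
    have h3 : 2 * E.card ≤ ∑ v ∈ Finset.Icc (b + 4 * m ^ 2 - m) (b + 4 * m ^ 2 - 2), (m - 2) := by
      rw [hfib, Finset.mul_sum]
      exact Finset.sum_le_sum fibbound
    rw [Finset.sum_const, Nat.card_Icc, smul_eq_mul] at h3
    have hcard : b + 4 * m ^ 2 - 2 + 1 - (b + 4 * m ^ 2 - m) = m - 1 := by omega
    rw [hcard] at h3
    omega
  -- shorts
  have hshorts : (Finset.univ.filter (fun i : Fin (2 * m ^ 2 + 1) => i.val ≠ 0)).card
      = 2 * m ^ 2 := by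
    have : (Finset.univ.filter (fun i : Fin (2 * m ^ 2 + 1) => i.val ≠ 0))
        = Finset.univ.erase ⟨0, Nat.succ_pos _⟩ := by
      ext i
      simp only [Finset.mem_filter, Finset.mem_univ, true_and, Finset.mem_erase, and_true, ne_eq, Fin.ext_iff, Fin.val_mk]
    rw [this, Finset.card_erase_of_mem (Finset.mem_univ _), Finset.card_univ, Fintype.card_fin]
    omega
  have hsubLE : (Finset.univ.filter (fun i : Fin (2 * m ^ 2 + 1) => i.val ≠ 0)) ⊆ L ∪ E := by
    intro i hi
    simp only [Finset.mem_filter, Finset.mem_univ, true_and] at hi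
    simp only [hL, hE, Finset.mem_union, Finset.mem_filter, Finset.mem_univ, true_and]
    omega
  have hLcard : q ≤ L.card := by
    have := Finset.card_le_card hsubLE
    have hu := Finset.card_union_le L E
    rw [hshorts] at this
    omega
  -- latency bound
  have hlat : ∀ i ∈ L, m ≤ p i + instOut m b i - instArrival m b i := by
    intro i hi
    simp only [hL, Finset.mem_filter, Finset.mem_univ, true_and] at hi
    obtain ⟨hi0, hpi⟩ := hi
    simp only [instOut, instArrival, hi0, if_false]
    omega
  have hsum : L.card • m ≤ ∑ i ∈ L, (p i + instOut m b i - instArrival m b i) :=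
    Finset.card_nsmul_le_sum L _ m hlat
  have hsub2 : ∑ i ∈ L, (p i + instOut m b i - instArrival m b i)
      ≤ TEL (instArrival m b) (instOut m b) p :=
    Finset.sum_le_sum_of_subset (Finset.subset_univ L)
  calc m ^ 2 * m = q * m := by rw [hq]
    _ ≤ L.card * m := Nat.mul_le_mul_right m hLcard
    _ = L.card • m := (smul_eq_mul _ _).symm
    _ ≤ _ := le_trans hsum hsub2
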